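/- Let $a < 0$, $A, B, C > 0$, and for $C' \geq C$ let $x_1(C')$ and $x_2(C')$ denote the unique zeros in $(a,0)$ and $(0,1)$ respectively of $f_{C'}(x) = A/(x - a) + B/x - C'/(1 - x)$. Then $x_1$ and $x_2$ are strictly decreasing functions of $C'$. -/

import Mathlib

open Set

private lemma f_strict_anti (a A B C x y : ℝ) (hA : 0 < A) (hB : 0 < B) (hC : 0 < C)
    (hax : a < x) (hxy : x < y) (hy1 : y < 1) (hxy0 : 0 < x * y) :
    A / (y - a) + B / y - C / (1 - y) < A / (x - a) + B / x - C / (1 - x) := by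
  have hx0 : x ≠ 0 := by intro h; rw [h] at hxy0; simp at hxy0
  have hy0 : y ≠ 0 := by intro h; rw [h] at hxy0; simp at hxy0
  have h1 : A / (y - a) < A / (x - a) :=
    div_lt_div_of_pos_left hA (by linarith) (by linarith)
  have h2 : B / y < B / x := by
    have hpos : 0 < B * (y - x) / (x * y) :=
      div_pos (mul_pos hB (by linarith)) hxy0
    have e : B / x - B / y = B * (y - x) / (x * y) := by
      field_simp
    linarith
  have h3 : C / (1 - x) < C / (1 - y) :=
    div_lt_div_of_pos_left hC (by linarith) (by linarith)
  linarith

private lemma zero_lt (a A B C δ x x' : ℝ) (hA : 0 < A) (hB : 0 < B) (hC : 0 < C)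
    (hδ : 0 < δ) (hax : a < x) (hax' : a < x') (hx1 : x < 1) (hx1' : x' < 1)
    (hxx' : 0 < x * x')
    (hf : A / (x - a) + B / x - C / (1 - x) = 0)
    (hf' : A / (x' - a) + B / x' - (C + δ) / (1 - x') = 0) :
    x' < x := by
  have hCδ : 0 < C + δ := by linarith
  have hfx : A / (x - a) + B / x - (C + δ) / (1 - x) < 0 := by
    have h1x : 0 < 1 - x := by linarith
    have : (C + δ) / (1 - x) = C / (1 - x) + δ / (1 - x) := add_div _ _ _
    have hd : 0 < δ / (1 - x) := div_pos hδ h1x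
    linarith
  by_contra h
  push_neg at h
  rcases eq_or_lt_of_le h with heq | hlt
  · rw [← heq] at hf'; linarith
  · have := f_strict_anti a A B (C + δ) x x' hA hB hCδ hax hlt hx1' hxx'
    linarith

/-- The zeros of `A/(x-a) + B/x - C'/(1-x)` in `(a,0)` and `(0,1)` are strictly
decreasing functions of the parameter `C'`. -/
theorem jacobi_angelesco_base_monotone_gamma
    (a A B C δ : ℝ) (ha : a < 0) (hA : 0 < A) (hB : 0 < B) (hC : 0 < C) (hδ : 0 < δ)
    (x₁ x₁' x₂ x₂' : ℝ)
    (hx₁ : x₁ ∈ Set.Ioo a 0) (hfx₁ : A / (x₁ - a) + B / x₁ - C / (1 - x₁) = 0)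
    (hx₁' : x₁' ∈ Set.Ioo a 0) (hfx₁' : A / (x₁' - a) + B / x₁' - (C + δ) / (1 - x₁') = 0)
    (hx₂ : x₂ ∈ Set.Ioo (0 : ℝ) 1) (hfx₂ : A / (x₂ - a) + B / x₂ - C / (1 - x₂) = 0)
    (hx₂' : x₂' ∈ Set.Ioo (0 : ℝ) 1)
    (hfx₂' : A / (x₂' - a) + B / x₂' - (C + δ) / (1 - x₂') = 0) :
    x₁' < x₁ ∧ x₂' < x₂ := by
  obtain ⟨h1a, h1b⟩ := hx₁
  obtain ⟨h1a', h1b'⟩ := hx₁'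
  obtain ⟨h2a, h2b⟩ := hx₂
  obtain ⟨h2a', h2b'⟩ := hx₂'
  exact ⟨zero_lt a A B C δ x₁ x₁' hA hB hC hδ h1a h1a' (by linarith) (by linarith)
      (mul_pos_of_neg_of_neg h1b h1b') hfx₁ hfx₁',
    zero_lt a A B C δ x₂ x₂' hA hB hC hδ (by linarith) (by linarith) h2b h2b'
      (mul_pos h2a h2a') hfx₂ hfx₂'⟩
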